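/- arXiv:1901.05783 — 2 statements merged into one kernel-verified Lean document; each statement's English description precedes it below -/
import Mathlib

section
/- Let E and F be real Banach spaces and let T : E → F be a bounded linear operator whose adjoint T* : F* → E* (defined by T*(ℓ) = ℓ ∘ T) is injective, i.e. N(T*) = {0}. Assume that there exist a bounded linear operator S̃ : F → E and a compact linear operator K : F → F such that T ∘ S̃ = I + K, where I denotes the identity of F. Then T admits a bounded linear right inverse: there exists a bounded linear operator S : F → E such that T ∘ S = I. -/
open Metric Set Filter
open scoped NNReal Topology

set_option maxHeartbeats 1000000 in
/-- Let `E` and `F` be real Banach spaces and `T : E → F` a bounded linear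
operator whose adjoint `T* : F* → E*`, `ℓ ↦ ℓ ∘ T`, is injective (`N(T*) = {0}`). If there exist
a bounded linear operator `S̃ : F → E` and a compact linear operator `K : F → F` such that
`T ∘ S̃ = I + K`, then `T` admits a bounded linear right inverse `S : F → E` with `T ∘ S = I`. -/
theorem stmt0 {E F : Type*}
    [NormedAddCommGroup E] [NormedSpace ℝ E] [CompleteSpace E]
    [NormedAddCommGroup F] [NormedSpace ℝ F] [CompleteSpace F]
    (T : E →L[ℝ] F)
    (hTadj : ∀ ℓ : F →L[ℝ] ℝ, ℓ.comp T = 0 → ℓ = 0)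
    (S' : F →L[ℝ] E) (K : F →L[ℝ] F) (hK : IsCompactOperator K)
    (hTS : T.comp S' = ContinuousLinearMap.id ℝ F + K) :
    ∃ S : F →L[ℝ] E, T.comp S = ContinuousLinearMap.id ℝ F := by
  classical
  set A : F →L[ℝ] F := ContinuousLinearMap.id ℝ F + K with hA
  have hAx : ∀ x, A x = x + K x := fun x => rfl
  have hTS' : ∀ x, T (S' x) = A x := fun x => by
    have := congrArg (fun (f : F →L[ℝ] F) => f x) hTS
    simpa using this
  set N : Submodule ℝ F := LinearMap.ker (A : F →ₗ[ℝ] F) with hN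
  have hker : ∀ x ∈ N, x = -(K x) := by
    intro x hx
    have hx0 : x + K x = 0 := by
      have : A x = 0 := hx
      rwa [hAx] at this
    exact eq_neg_of_add_eq_zero_left hx0
  -- compact set containing image of unit ball under K
  obtain ⟨C, hCcomp, hCsub⟩ :=
    hK.image_closedBall_subset_compact (f := (K : F →ₗ[ℝ] F)) 1
  -- Step 1 : N is finite dimensional
  have hNclosed : IsClosed (N : Set F) := by
    have : (N : Set F) = A ⁻¹' {0} := by
      ext x; simp [hN, LinearMap.mem_ker]
    rw [this]; exact isClosed_singleton.preimage A.continuous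
  have hNball : IsCompact (closedBall (0 : N) 1) := by
    rw [Subtype.isCompact_iff]
    have himg : ((↑) '' closedBall (0 : N) 1 : Set F)
        = (N : Set F) ∩ closedBall (0 : F) 1 := by
      ext x
      constructor
      · rintro ⟨⟨y, hy⟩, hmem, rfl⟩
        refine ⟨hy, ?_⟩
        simpa [Metric.mem_closedBall, dist_eq_norm] using hmem
      · rintro ⟨hxN, hxB⟩
        refine ⟨⟨x, hxN⟩, ?_, rfl⟩
        simpa [Metric.mem_closedBall, dist_eq_norm] using hxB
    rw [himg]
    have hclosed : IsClosed ((N : Set F) ∩ closedBall (0 : F) 1) :=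
      hNclosed.inter Metric.isClosed_closedBall
    refine IsCompact.of_isClosed_subset hCcomp.neg hclosed ?_
    rintro x ⟨hxN, hxB⟩
    have : x = -(K x) := hker x hxN
    rw [this]
    exact Set.neg_mem_neg.mpr (hCsub ⟨x, hxB, rfl⟩)
  have hNfin : FiniteDimensional ℝ N :=
    FiniteDimensional.of_isCompact_closedBall₀ ℝ one_pos hNball
  -- Step 2 : closed complement M of N
  haveI := hNfin
  obtain ⟨M, hMclosed, hcompl⟩ :=
    (Submodule.ClosedComplemented.of_finiteDimensional N).exists_isClosed_isCompl
  haveI : CompleteSpace M := hMclosed.completeSpace_coe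
  -- Step 3 : A is bounded below on M
  set f : M →L[ℝ] F := A.comp M.subtypeL with hf
  have hfx : ∀ m : M, f m = A (m : F) := fun m => rfl
  have hbb : ∃ c : ℝ≥0, ∀ x : M, ‖x‖ ≤ c * ‖f x‖ := by
    by_contra hcon
    push_neg at hcon
    choose m hm using hcon
    set x : ℕ → M := fun n => m ((n : ℝ≥0) + 1) with hxdef
    have key : ∀ n : ℕ, ((n : ℝ) + 1) * ‖f (x n)‖ < ‖x n‖ := by
      intro n
      have := hm ((n : ℝ≥0) + 1)
      have hcast : (((n : ℝ≥0) + 1 : ℝ≥0) : ℝ) = (n : ℝ) + 1 := by push_cast; ring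
      rw [hcast] at this
      exact this
    have hxpos : ∀ n, (0:ℝ) < ‖x n‖ := by
      intro n
      have h := key n
      nlinarith [norm_nonneg (f (x n)), norm_nonneg (x n)]
    set u : ℕ → M := fun n => ‖x n‖⁻¹ • x n with hu
    have hunorm : ∀ n, ‖u n‖ = 1 := by
      intro n
      simp only [hu, norm_smul, norm_inv, norm_norm]
      exact inv_mul_cancel₀ (hxpos n).ne'
    have hfu : ∀ n, ‖f (u n)‖ ≤ 1 / ((n : ℝ) + 1) := by
      intro n
      have h2 : ‖f (u n)‖ = ‖x n‖⁻¹ * ‖f (x n)‖ := by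
        simp [hu, norm_smul]
      rw [h2]
      have h := key n
      have hpos := hxpos n
      have hn1 : (0:ℝ) < (n : ℝ) + 1 := by positivity
      rw [inv_mul_le_iff₀ hpos, mul_one_div, le_div_iff₀ hn1]
      nlinarith [key n]
    have hfu0 : Tendsto (fun n => f (u n)) atTop (𝓝 0) :=
      squeeze_zero_norm hfu tendsto_one_div_add_atTop_nhds_zero_nat
    have humem : ∀ n, K ((u n : F)) ∈ C := by
      intro n
      refine hCsub ⟨(u n : F), ?_, rfl⟩
      simp only [Metric.mem_closedBall, dist_zero_right]
      exact le_of_eq (hunorm n)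
    obtain ⟨y, hyC, φ, hφ, hconv⟩ := hCcomp.tendsto_subseq humem
    have hdecomp : ∀ n, ((u n : F)) = f (u n) - K ((u n : F)) := by
      intro n
      have := hfx (u n)
      rw [hAx] at this
      rw [this]; abel
    have hulim : Tendsto (fun n => ((u (φ n) : F))) atTop (𝓝 (-y)) := by
      have h1 : Tendsto (fun n => f (u (φ n))) atTop (𝓝 0) :=
        hfu0.comp hφ.tendsto_atTop
      have h2 : Tendsto (fun n => f (u (φ n)) - K ((u (φ n) : F))) atTop (𝓝 (0 - y)) :=
        h1.sub hconv
      rw [zero_sub] at h2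
      exact h2.congr fun n => (hdecomp (φ n)).symm
    have hyM : -y ∈ M := hMclosed.mem_of_tendsto hulim
      (Eventually.of_forall fun n => (u (φ n)).2)
    have hyN : -y ∈ N := by
      have h1 : Tendsto (fun n => A ((u (φ n) : F))) atTop (𝓝 (A (-y))) :=
        (A.continuous.tendsto _).comp hulim
      have h2 : Tendsto (fun n => A ((u (φ n) : F))) atTop (𝓝 0) := by
        refine (hfu0.comp hφ.tendsto_atTop).congr fun n => ?_
        exact (hfx (u (φ n)))
      have : A (-y) = 0 := tendsto_nhds_unique h1 h2
      exact this
    have hnorm1 : ‖(-y : F)‖ = 1 := by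
      have h1 : Tendsto (fun n => ‖((u (φ n) : F))‖) atTop (𝓝 ‖(-y : F)‖) :=
        (continuous_norm.tendsto _).comp hulim
      have h2 : Tendsto (fun n => ‖((u (φ n) : F))‖) atTop (𝓝 1) := by
        refine tendsto_const_nhds.congr fun n => ?_
        exact (hunorm (φ n)).symm
      exact tendsto_nhds_unique h1 h2
    have : -y = 0 := by
      have := hcompl.disjoint
      exact (Submodule.disjoint_def.mp this) (-y) hyN hyM
    rw [this] at hnorm1
    simp at hnorm1
  obtain ⟨c, hc⟩ := hbb
  have hanti : AntilipschitzWith c f := f.antilipschitz_of_bound hc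
  set R : Submodule ℝ F := LinearMap.range (A : F →ₗ[ℝ] F) with hR
  have hrange : Set.range f = (R : Set F) := by
    apply subset_antisymm
    · rintro _ ⟨x, rfl⟩
      exact ⟨(x : F), rfl⟩
    · rintro _ ⟨x, rfl⟩
      have hx : x ∈ N ⊔ M := by rw [hcompl.sup_eq_top]; trivial
      obtain ⟨n, hn, m', hm', rfl⟩ := Submodule.mem_sup.mp hx
      refine ⟨⟨m', hm'⟩, ?_⟩
      have hn0 : A n = 0 := hn
      rw [hfx]
      show A m' = A (n + m')
      rw [map_add, hn0, zero_add]
  have hRclosed : IsClosed (R : Set F) := by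
    rw [← hrange]
    exact hanti.isClosed_range f.uniformContinuous
  haveI : CompleteSpace R := hRclosed.completeSpace_coe
  haveI : IsClosed (R : Set F) := hRclosed
  -- the quotient map as a continuous linear map
  set q : F →L[ℝ] (F ⧸ R) := R.mkQ.mkContinuous 1
    (fun x => by simpa using Submodule.Quotient.norm_mk_le R x) with hq
  have hq_apply : ∀ x : F, q x = Submodule.Quotient.mk x := fun x => rfl
  have hqR : ∀ x ∈ R, q x = 0 := by
    intro x hx
    rw [hq_apply, Submodule.Quotient.mk_eq_zero]
    exact hx
  -- Step 4 : F ⧸ R is finite dimensional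
  have hqcomp : IsCompactOperator (⇑q) := by
    have h1 : IsCompactOperator (⇑q ∘ ⇑K) := hK.continuous_comp q.continuous
    have h2 : IsCompactOperator (-(⇑q ∘ ⇑K)) := h1.neg
    have : ⇑q = -(⇑q ∘ ⇑K) := by
      funext x
      have hAq : q (A x) = 0 := hqR _ ⟨x, rfl⟩
      rw [hAx, map_add] at hAq
      simp only [Pi.neg_apply, Function.comp_apply]
      exact eq_neg_of_add_eq_zero_left hAq
    rw [this]
    exact h2
  obtain ⟨D, hDcomp, hDsub⟩ :=
    hqcomp.image_closedBall_subset_compact (f := (q : F →ₗ[ℝ] F ⧸ R)) 2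
  have hQball : IsCompact (closedBall (0 : F ⧸ R) 1) := by
    refine IsCompact.of_isClosed_subset hDcomp Metric.isClosed_closedBall ?_
    intro y hy
    obtain ⟨x, hxmk, hxlt⟩ := Submodule.Quotient.norm_mk_lt y one_pos
    refine hDsub ⟨x, ?_, hxmk⟩
    simp only [Metric.mem_closedBall, dist_zero_right]
    have : ‖y‖ ≤ 1 := by simpa [dist_zero_right] using hy
    linarith
  haveI hQfin : FiniteDimensional ℝ (F ⧸ R) :=
    FiniteDimensional.of_isCompact_closedBall₀ ℝ one_pos hQball
  -- Step 5 : q ∘ T has dense (hence full) range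
  have hqT : LinearMap.range ((q.comp T : E →L[ℝ] F ⧸ R) : E →ₗ[ℝ] F ⧸ R) = ⊤ := by
    by_contra hne
    obtain ⟨v, hv⟩ : ∃ v : F ⧸ R,
        v ∉ LinearMap.range ((q.comp T : E →L[ℝ] F ⧸ R) : E →ₗ[ℝ] F ⧸ R) := by
      by_contra h
      push_neg at h
      exact hne (Submodule.eq_top_iff'.mpr h)
    set V : Submodule ℝ (F ⧸ R) :=
      LinearMap.range ((q.comp T : E →L[ℝ] F ⧸ R) : E →ₗ[ℝ] F ⧸ R) with hV
    have hπv : V.mkQ v ≠ 0 := by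
      rw [Submodule.mkQ_apply, ne_eq, Submodule.Quotient.mk_eq_zero]
      exact hv
    obtain ⟨φ, hφ⟩ : ∃ φ : Module.Dual ℝ ((F ⧸ R) ⧸ V), φ (V.mkQ v) ≠ 0 := by
      by_contra h
      push_neg at h
      exact hπv ((Module.forall_dual_apply_eq_zero_iff ℝ (V.mkQ v)).mp h)
    set ℓbar : (F ⧸ R) →ₗ[ℝ] ℝ := φ ∘ₗ V.mkQ with hℓbar
    set ℓ : F →L[ℝ] ℝ := (LinearMap.toContinuousLinearMap ℓbar).comp q with hℓ
    have hℓT : ℓ.comp T = 0 := by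
      ext e
      have hmem : q (T e) ∈ V := ⟨e, rfl⟩
      have : ℓ (T e) = φ (V.mkQ (q (T e))) := rfl
      rw [ContinuousLinearMap.comp_apply, ContinuousLinearMap.zero_apply, this]
      have h0 : V.mkQ (q (T e)) = 0 := by
        rw [Submodule.mkQ_apply, Submodule.Quotient.mk_eq_zero]
        exact hmem
      rw [h0, map_zero]
    have hℓ0 : ℓ = 0 := hTadj ℓ hℓT
    obtain ⟨x, hx⟩ := Submodule.Quotient.mk_surjective R v
    have : ℓ x = φ (V.mkQ v) := by
      rw [← hx]
      rfl
    rw [hℓ0] at this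
    exact hφ (by simpa using this.symm)
  obtain ⟨σ, hσ⟩ := LinearMap.exists_rightInverse_of_surjective
    ((q.comp T : E →L[ℝ] F ⧸ R) : E →ₗ[ℝ] F ⧸ R) hqT
  set σc : (F ⧸ R) →L[ℝ] E := LinearMap.toContinuousLinearMap σ with hσc
  have hσ' : ∀ y : F ⧸ R, q (T (σc y)) = y := by
    intro y
    have := LinearMap.ext_iff.mp hσ y
    simpa [hσc] using this
  -- Step 6 : assemble the right inverse
  have hMR : ∀ m : M, f m ∈ R := fun m => ⟨(m : F), rfl⟩
  set f' : M →L[ℝ] R := f.codRestrict R hMR with hf'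
  have hf'inj : LinearMap.ker (f' : M →ₗ[ℝ] R) = ⊥ := by
    rw [LinearMap.ker_eq_bot']
    intro m hm
    have h0 : f m = 0 := congrArg Subtype.val hm
    have := hc m
    rw [h0] at this
    simp only [norm_zero, mul_zero] at this
    exact norm_le_zero_iff.mp this
  have hf'surj : LinearMap.range (f' : M →ₗ[ℝ] R) = ⊤ := by
    rw [Submodule.eq_top_iff']
    rintro ⟨r, hr⟩
    have hr' : r ∈ Set.range f := by rw [hrange]; exact hr
    obtain ⟨m, hm⟩ := hr'
    exact ⟨m, Subtype.ext hm⟩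
  set e : M ≃L[ℝ] R := ContinuousLinearEquiv.ofBijective f' hf'inj hf'surj with he
  set B : F →L[ℝ] F := ContinuousLinearMap.id ℝ F - T.comp (σc.comp q) with hB
  have hBR : ∀ x, B x ∈ R := by
    intro x
    have hq0 : q (B x) = 0 := by
      have hBx : B x = x - T (σc (q x)) := rfl
      rw [hBx, map_sub, hσ' (q x), sub_self]
    rw [hq_apply, Submodule.Quotient.mk_eq_zero] at hq0
    exact hq0
  set B' : F →L[ℝ] R := B.codRestrict R hBR with hB'
  refine ⟨σc.comp q + (S'.comp (M.subtypeL.comp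
      (e.symm : R →L[ℝ] M))).comp B', ?_⟩
  ext x
  simp only [ContinuousLinearMap.add_apply, ContinuousLinearMap.comp_apply,
    ContinuousLinearMap.coe_id', id, ContinuousLinearMap.coe_coe]
  rw [map_add]
  show T (σc (q x)) + T (S' ((e.symm (B' x) : M) : F)) = x
  have h1 : T (S' ((e.symm (B' x) : M) : F)) = A ((e.symm (B' x) : M) : F) := hTS' _
  have h2 : A ((e.symm (B' x) : M) : F) = ((f' (e.symm (B' x)) : R) : F) := rfl
  have h3 : f' (e.symm (B' x)) = B' x := by
    have h4 := e.apply_symm_apply (B' x)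
    rwa [he, ContinuousLinearEquiv.coeFn_ofBijective] at h4
  have h5 : ((B' x : R) : F) = x - T (σc (q x)) := rfl
  rw [h1, h2, h3, h5]
  abel
end

section
/- Let Ω ⊂ ℝⁿ be an open connected set, let a : Ω → ℝⁿ be continuous, and assume that a is not the gradient of a C¹ function: there exists no differentiable function A : Ω → ℝ with ∇A(x) = a(x) for every x ∈ Ω. If g : Ω → ℝ is differentiable and satisfies ∇g(x) = g(x)·a(x) for every x ∈ Ω, then g ≡ 0 on Ω. -/
open Set Metric InnerProductSpace

/-- Let `Ω ⊂ ℝⁿ` be an open connected set, `a : Ω → ℝⁿ` continuous, and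
assume `a` is not the gradient of a (automatically `C¹`) differentiable function on `Ω`.
If `g : Ω → ℝ` is differentiable with `∇g(x) = g(x) • a(x)` for every `x ∈ Ω`, then `g ≡ 0`
on `Ω`. -/
theorem stmt10 (n : ℕ) (Ω : Set (EuclideanSpace ℝ (Fin n)))
    (hΩopen : IsOpen Ω) (hΩconn : IsConnected Ω)
    (a : EuclideanSpace ℝ (Fin n) → EuclideanSpace ℝ (Fin n)) (ha : ContinuousOn a Ω)
    (hnotgrad : ¬ ∃ A : EuclideanSpace ℝ (Fin n) → ℝ, ∀ x ∈ Ω, HasGradientAt A (a x) x)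
    (g : EuclideanSpace ℝ (Fin n) → ℝ)
    (hg : ∀ x ∈ Ω, HasGradientAt g (g x • a x) x) :
    ∀ x ∈ Ω, g x = 0 := by
  classical
  have _dummy : True := trivial
  -- local vanishing: if g x₀ = 0 for x₀ ∈ Ω, then g vanishes on a ball around x₀
  have key : ∀ x₀ ∈ Ω, g x₀ = 0 → ∃ r > 0, ball x₀ r ⊆ Ω ∧ ∀ x ∈ ball x₀ r, g x = 0 := by
    intro x₀ hx₀ hg0
    obtain ⟨ε, hε, hball⟩ := Metric.isOpen_iff.mp hΩopen x₀ hx₀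
    set r : ℝ := ε / 2 with hr
    have hrpos : 0 < r := by positivity
    have hcb : closedBall x₀ r ⊆ Ω := fun y hy =>
      hball (lt_of_le_of_lt (mem_closedBall.mp hy) (by rw [hr]; linarith))
    obtain ⟨C, hC⟩ := (isCompact_closedBall x₀ r).exists_bound_of_continuousOn
      (ha.mono hcb)
    have hC0 : 0 ≤ C := le_trans (norm_nonneg _) (hC x₀ (mem_closedBall_self hrpos.le))
    refine ⟨r, hrpos, fun y hy => hcb (ball_subset_closedBall hy), fun x hx => ?_⟩
    set c : EuclideanSpace ℝ (Fin n) := x - x₀ with hc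
    have hcnorm : ‖c‖ ≤ r := by
      have := mem_ball_iff_norm.mp hx
      linarith
    set γ : ℝ → EuclideanSpace ℝ (Fin n) := fun t => x₀ + t • c with hγ
    have hγmem : ∀ t ∈ Icc (0:ℝ) 1, γ t ∈ closedBall x₀ r := by
      intro t ht
      simp only [hγ, mem_closedBall, dist_eq_norm, add_sub_cancel_left, norm_smul,
        Real.norm_eq_abs, abs_of_nonneg ht.1]
      calc t * ‖c‖ ≤ 1 * ‖c‖ := by
            apply mul_le_mul_of_nonneg_right ht.2 (norm_nonneg _)
        _ ≤ r := by rwa [one_mul]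
    set f : ℝ → ℝ := fun t => g (γ t) with hf
    set f' : ℝ → ℝ := fun t => g (γ t) * ⟪a (γ t), c⟫_ℝ with hf'
    have hγderiv : ∀ t : ℝ, HasDerivAt γ c t := by
      intro t
      simpa [hγ] using ((hasDerivAt_id t).smul_const c).const_add x₀
    have hderiv : ∀ t ∈ Icc (0:ℝ) 1, HasDerivAt f (f' t) t := by
      intro t ht
      have hmem := hcb (hγmem t ht)
      have h1 := (hg (γ t) hmem).hasFDerivAt
      have h2 := h1.comp_hasDerivAt t (hγderiv t)
      have : (toDual ℝ (EuclideanSpace ℝ (Fin n)) (g (γ t) • a (γ t))) c = f' t := by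
        simp [toDual_apply_apply, real_inner_smul_left, hf']
      rwa [this] at h2
    have hcont : ContinuousOn f (Icc 0 1) := fun t ht =>
      ((hderiv t ht).continuousAt).continuousWithinAt
    have hbound : ∀ t ∈ Ico (0:ℝ) 1, ‖f' t‖ ≤ (C * r) * ‖f t‖ + 0 := by
      intro t ht
      have hmem := hγmem t ⟨ht.1, ht.2.le⟩
      rw [add_zero, hf']
      simp only [Real.norm_eq_abs, abs_mul]
      calc |g (γ t)| * |⟪a (γ t), c⟫_ℝ| ≤ |g (γ t)| * (‖a (γ t)‖ * ‖c‖) := by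
            apply mul_le_mul_of_nonneg_left (abs_real_inner_le_norm _ _) (abs_nonneg _)
        _ ≤ |g (γ t)| * (C * r) := by
            apply mul_le_mul_of_nonneg_left _ (abs_nonneg _)
            exact mul_le_mul (hC _ hmem) hcnorm (norm_nonneg _) hC0
        _ = (C * r) * ‖f t‖ := by rw [mul_comm]; rfl
    have hinit : ‖f 0‖ ≤ 0 := by
      simp [hf, hγ, hg0]
    have := norm_le_gronwallBound_of_norm_deriv_right_le hcont
      (fun t ht => (hderiv t ⟨ht.1, ht.2.le⟩).hasDerivWithinAt) hinit hbound 1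
      (by norm_num)
    rw [gronwallBound_ε0_δ0] at this
    have hf1 : f 1 = 0 := by
      have := norm_le_zero_iff.mp this
      exact this
    simpa [hf, hγ, hc] using hf1
  -- the two open sets
  set u : Set (EuclideanSpace ℝ (Fin n)) := {x | x ∈ Ω ∧ g x ≠ 0} with hu
  set v : Set (EuclideanSpace ℝ (Fin n)) := {x | x ∈ Ω ∧ g x = 0} with hv
  have huopen : IsOpen u := by
    rw [isOpen_iff_mem_nhds]
    rintro x ⟨hxΩ, hxg⟩
    have hcont : ContinuousAt g x := (hg x hxΩ).hasFDerivAt.differentiableAt.continuousAt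
    have h1 : {y | g y ≠ 0} ∈ nhds x := hcont.preimage_mem_nhds (isOpen_compl_singleton.mem_nhds hxg)
    filter_upwards [h1, hΩopen.mem_nhds hxΩ] with y h1 h2
    exact ⟨h2, h1⟩
  have hvopen : IsOpen v := by
    rw [isOpen_iff_mem_nhds]
    rintro x ⟨hxΩ, hxg⟩
    obtain ⟨r, hrpos, hrΩ, hrz⟩ := key x hxΩ hxg
    filter_upwards [ball_mem_nhds x hrpos] with y hy
    exact ⟨hrΩ hy, hrz y hy⟩
  have hcover : Ω ⊆ u ∪ v := by
    intro x hx
    by_cases h : g x = 0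
    · exact Or.inr ⟨hx, h⟩
    · exact Or.inl ⟨hx, h⟩
  have hdisj : Disjoint u v := by
    rw [Set.disjoint_left]
    rintro x ⟨_, h1⟩ ⟨_, h2⟩
    exact h1 h2
  rcases hΩconn.isPreconnected.subset_or_subset huopen hvopen hdisj hcover with h | h
  · -- g never vanishes: build potential log ∘ g, contradiction
    exfalso
    apply hnotgrad
    refine ⟨Real.log ∘ g, fun x hx => ?_⟩
    have hgx : g x ≠ 0 := (h hx).2
    have h1 : HasDerivAt Real.log (g x)⁻¹ (g x) := Real.hasDerivAt_log hgx
    have h2 := (hg x hx).hasFDerivAt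
    have h3 := h1.comp_hasFDerivAt x h2
    have : (g x)⁻¹ • (toDual ℝ (EuclideanSpace ℝ (Fin n))) (g x • a x) = (toDual ℝ (EuclideanSpace ℝ (Fin n))) (a x) := by
      rw [← map_smul, smul_smul, inv_mul_cancel₀ hgx, one_smul]
    rw [this] at h3
    simpa using h3.hasGradientAt
  · exact fun x hx => (h hx).2
end
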